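/- Assume l_j > 0 for all j, the q_j > 0 are pairwise distinct, and q_n < max_{1≤j≤n−1} q_j. Then the derivative g₁'(β) = ∑_{j=1}^{n−1} l_j q_j ψ'(β q_j) − l_n q_n ψ'(β q_n) has at most two zeros on the interval (0, β_max), where β_max = φ'(0)/max_j q_j. -/

import Mathlib

open scoped BigOperators
open Set Filter

/- ### Auxiliary general lemmas -/

private lemma aux_antitone_glue {f : ℝ → ℝ} {a c b : ℝ} (hac : a ≤ c) (hcb : c ≤ b)
    (h1 : AntitoneOn f (Icc a c)) (h2 : AntitoneOn f (Icc c b)) :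
    AntitoneOn f (Icc a b) := by
  intro u hu v hv huv
  rcases le_total v c with h | h
  · exact h1 ⟨hu.1, huv.trans h⟩ ⟨hv.1, h⟩ huv
  · rcases le_total u c with h' | h'
    · exact (h2 ⟨le_rfl, hcb⟩ ⟨h, hv.2⟩ h).trans (h1 ⟨hu.1, h'⟩ ⟨hac, le_rfl⟩ h')
    · exact h2 ⟨h', hu.2⟩ ⟨h'.trans huv, hv.2⟩ huv

private lemma aux_antitoneOn_off_finite {B : Set ℝ} (hB : B.Finite) :
    ∀ (f : ℝ → ℝ) (a b : ℝ), ContinuousOn f (Icc a b) →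
      (∀ x ∈ Ioo a b \ B, DifferentiableAt ℝ f x ∧ deriv f x ≤ 0) →
      AntitoneOn f (Icc a b) := by
  refine Set.Finite.induction_on (motive := fun B _ => ∀ (f : ℝ → ℝ) (a b : ℝ),
      ContinuousOn f (Icc a b) →
      (∀ x ∈ Ioo a b \ B, DifferentiableAt ℝ f x ∧ deriv f x ≤ 0) →
      AntitoneOn f (Icc a b)) B hB ?_ ?_
  case refine_1 =>
    intro f a b hc hd
    refine antitoneOn_of_deriv_nonpos (convex_Icc a b) hc ?_ ?_
    · rw [interior_Icc]
      exact fun x hx => ((hd x (by simpa using hx)).1).differentiableWithinAt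
    · rw [interior_Icc]
      exact fun x hx => (hd x (by simpa using hx)).2
  case refine_2 =>
    intro c B' hc' hB' ih f a b hc hd
    by_cases hmem : c ∈ Ioo a b
    · have h1 : AntitoneOn f (Icc a c) := by
        refine ih f a c (hc.mono (Icc_subset_Icc le_rfl hmem.2.le)) ?_
        intro x hx
        refine hd x ⟨⟨hx.1.1, hx.1.2.trans hmem.2⟩, ?_⟩
        simp only [Set.mem_insert_iff, not_or]
        exact ⟨ne_of_lt hx.1.2, hx.2⟩
      have h2 : AntitoneOn f (Icc c b) := by
        refine ih f c b (hc.mono (Icc_subset_Icc hmem.1.le le_rfl)) ?_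
        intro x hx
        refine hd x ⟨⟨hmem.1.trans hx.1.1, hx.1.2⟩, ?_⟩
        simp only [Set.mem_insert_iff, not_or]
        exact ⟨ne_of_gt hx.1.1, hx.2⟩
      exact aux_antitone_glue hmem.1.le hmem.2.le h1 h2
    · refine ih f a b hc ?_
      intro x hx
      refine hd x ⟨hx.1, ?_⟩
      simp only [Set.mem_insert_iff, not_or]
      exact ⟨fun h => hmem (h ▸ hx.1), hx.2⟩

private lemma aux_monotoneOn_off_finite {B : Set ℝ} (hB : B.Finite) (f : ℝ → ℝ) (a b : ℝ)
    (hc : ContinuousOn f (Icc a b))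
    (hd : ∀ x ∈ Ioo a b \ B, DifferentiableAt ℝ f x ∧ 0 ≤ deriv f x) :
    MonotoneOn f (Icc a b) := by
  have h := aux_antitoneOn_off_finite hB (fun x => -f x) a b (hc.neg) ?_
  · intro u hu v hv huv
    have := h hu hv huv
    simpa using this
  · intro x hx
    refine ⟨(hd x hx).1.neg, ?_⟩
    rw [deriv.fun_neg]
    simpa using (hd x hx).2

private lemma aux_deriv_nonneg_of_monotoneOn {f : ℝ → ℝ} {x : ℝ} {s : Set ℝ}
    (hs : s ∈ nhds x) (hm : MonotoneOn f s) (hd : DifferentiableAt ℝ f x) :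
    0 ≤ deriv f x := by
  have h := hd.hasDerivAt
  rw [hasDerivAt_iff_tendsto_slope] at h
  have h' : Tendsto (slope f x) (nhdsWithin x (Ioi x)) (nhds (deriv f x)) :=
    h.mono_left (nhdsWithin_mono x (fun y hy => (ne_of_gt hy : y ≠ x)))
  refine ge_of_tendsto h' ?_
  have hev : ∀ᶠ y in nhdsWithin x (Ioi x), y ∈ s :=
    eventually_nhdsWithin_of_eventually_nhds (eventually_of_mem hs (fun _ h => h))
  filter_upwards [hev, self_mem_nhdsWithin] with y hy hy'
  rw [slope_def_field]
  have hxs : x ∈ s := mem_of_mem_nhds hs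
  have h1 : f x ≤ f y := hm hxs hy (le_of_lt hy')
  have hxy : (0:ℝ) < y - x := sub_pos.mpr hy'
  exact div_nonneg (by linarith) hxy.le

private lemma aux_deriv_nonpos_of_antitoneOn {f : ℝ → ℝ} {x : ℝ} {s : Set ℝ}
    (hs : s ∈ nhds x) (hm : AntitoneOn f s) (hd : DifferentiableAt ℝ f x) :
    deriv f x ≤ 0 := by
  have h := aux_deriv_nonneg_of_monotoneOn (f := fun y => -f y) hs ?_ hd.neg
  · rw [deriv.fun_neg] at h; linarith
  · intro u hu v hv huv
    simpa using hm hu hv huv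

private lemma aux_subsingleton_zero {u v : ℝ → ℝ} {s : Set ℝ}
    (h : StrictMonoOn (fun β => u β / v β) s ∨ StrictAntiOn (fun β => u β / v β) s) :
    ({β ∈ s | u β = 0} ∪ {β ∈ s | v β = 0}).Subsingleton := by
  intro x hx y hy
  by_contra hne
  have hx0 : u x / v x = 0 := by
    rcases hx with h' | h'
    · rw [h'.2, zero_div]
    · rw [h'.2, div_zero]
  have hy0 : u y / v y = 0 := by
    rcases hy with h' | h'
    · rw [h'.2, zero_div]
    · rw [h'.2, div_zero]
  have hxs : x ∈ s := by rcases hx with h' | h' <;> exact h'.1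
  have hys : y ∈ s := by rcases hy with h' | h' <;> exact h'.1
  rcases lt_or_gt_of_ne hne with hlt | hlt
  · rcases h with h | h
    · have := h hxs hys hlt; simp only [] at this; rw [hx0, hy0] at this; exact lt_irrefl 0 this
    · have := h hxs hys hlt; simp only [] at this; rw [hx0, hy0] at this; exact lt_irrefl 0 this
  · rcases h with h | h
    · have := h hys hxs hlt; simp only [] at this; rw [hx0, hy0] at this; exact lt_irrefl 0 this
    · have := h hys hxs hlt; simp only [] at this; rw [hx0, hy0] at this; exact lt_irrefl 0 this

/- ### Facts about φ and ψ -/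

section PhiPsi
variable {φ ψ : ℝ → ℝ}

private lemma aux_contdiff1 (hφC : ContDiff ℝ 2 φ) : ContDiff ℝ 1 (deriv φ) := by
  have h2 : ContDiff ℝ (1+1 : ℕ) φ := by norm_num; exact hφC
  exact ((contDiff_succ_iff_deriv).mp (by exact_mod_cast h2)).2.2

private lemma aux_phi2_cont (hφC : ContDiff ℝ 2 φ) : Continuous (deriv (deriv φ)) :=
  (aux_contdiff1 hφC).continuous_deriv le_rfl

private lemma aux_phi1_diff (hφC : ContDiff ℝ 2 φ) : Differentiable ℝ (deriv φ) :=
  (aux_contdiff1 hφC).differentiable one_ne_zero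

private lemma aux_phi1_cont (hφC : ContDiff ℝ 2 φ) : Continuous (deriv φ) :=
  (aux_contdiff1 hφC).continuous

private lemma aux_phi2_neg (hφ'' : ∀ x : ℝ, x ≠ 0 → x * deriv (deriv φ) x < 0)
    {x : ℝ} (hx : 0 < x) : deriv (deriv φ) x < 0 := by
  have := hφ'' x hx.ne'
  nlinarith

private lemma aux_phi2_zero (hφC : ContDiff ℝ 2 φ) (hodd : ∀ x : ℝ, φ (-x) = -φ x) :
    deriv (deriv φ) 0 = 0 := by
  have heven : ∀ x : ℝ, deriv φ (-x) = deriv φ x := by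
    intro x
    have h1 : deriv (fun y : ℝ => φ (-y)) x = -deriv φ (-x) := deriv_comp_neg φ x
    have h2 : (fun y : ℝ => φ (-y)) = fun y : ℝ => -φ y := funext hodd
    rw [h2] at h1
    have h3 : deriv (fun y : ℝ => -φ y) x = -deriv φ x := deriv.neg
    rw [h3] at h1
    linarith
  have hodd2 : deriv (deriv φ) (-(0:ℝ)) = - deriv (deriv φ) 0 := by
    have h1 : deriv (fun y : ℝ => deriv φ (-y)) 0 = -deriv (deriv φ) (-(0:ℝ)) :=
      deriv_comp_neg (deriv φ) 0
    have h2 : (fun y : ℝ => deriv φ (-y)) = deriv φ := funext heven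
    rw [h2] at h1
    linarith
  have := hodd2
  simp only [neg_zero] at this
  linarith

private lemma aux_phi1_anti (hφC : ContDiff ℝ 2 φ)
    (hφ'' : ∀ x : ℝ, x ≠ 0 → x * deriv (deriv φ) x < 0) :
    StrictAntiOn (deriv φ) (Ici 0) := by
  refine strictAntiOn_of_deriv_neg (convex_Ici 0) (aux_phi1_cont hφC).continuousOn ?_
  rw [interior_Ici]
  intro x hx
  exact aux_phi2_neg hφ'' hx

private lemma aux_psi_pos
    (hψ : ∀ y : ℝ, 0 < y → y ≤ deriv φ 0 → 0 ≤ ψ y ∧ deriv φ (ψ y) = y)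
    {y : ℝ} (hy : y ∈ Ioo 0 (deriv φ 0)) : 0 < ψ y := by
  rcases hψ y hy.1 hy.2.le with ⟨h0, h1⟩
  rcases lt_or_eq_of_le h0 with h | h
  · exact h
  · exfalso; rw [← h] at h1; rw [← h1] at hy; exact lt_irrefl _ hy.2

private lemma aux_psi_cont
    (hψ : ∀ y : ℝ, 0 < y → y ≤ deriv φ 0 → 0 ≤ ψ y ∧ deriv φ (ψ y) = y)
    (hanti : StrictAntiOn (deriv φ) (Ici 0))
    {y : ℝ} (hy : y ∈ Ioo 0 (deriv φ 0)) : ContinuousAt ψ y := by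
  have hpos : ∀ z ∈ Ioo 0 (deriv φ 0), 0 < ψ z := fun z hz => aux_psi_pos hψ hz
  have hIoo : Ioo 0 (deriv φ 0) ∈ nhds y := Ioo_mem_nhds hy.1 hy.2
  have hx0 : deriv φ (ψ y) = y := (hψ y hy.1 hy.2.le).2
  rw [ContinuousAt, tendsto_order]
  constructor
  · intro a ha
    rcases lt_or_ge a 0 with ha0 | ha0
    · filter_upwards [hIoo] with z hz
      exact lt_of_lt_of_le ha0 (hψ z hz.1 hz.2.le).1
    · have hay : deriv φ a > y := by
        calc y = deriv φ (ψ y) := hx0.symm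
        _ < deriv φ a := hanti (mem_Ici.mpr ha0) (mem_Ici.mpr (hpos y hy).le) ha
      filter_upwards [hIoo, (tendsto_id (x := nhds y)).eventually_lt_const hay] with z hz hz2
      by_contra hcon
      push_neg at hcon
      have : deriv φ a ≤ deriv φ (ψ z) := by
        rcases lt_or_eq_of_le hcon with h | h
        · exact (hanti (mem_Ici.mpr (hψ z hz.1 hz.2.le).1) (mem_Ici.mpr ha0) h).le
        · rw [h]
      rw [(hψ z hz.1 hz.2.le).2] at this
      exact absurd hz2 (not_lt.mpr this)
  · intro b hb
    have hby : deriv φ b < y := by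
      calc deriv φ b < deriv φ (ψ y) :=
            hanti (mem_Ici.mpr (hpos y hy).le) (mem_Ici.mpr ((hpos y hy).le.trans hb.le)) hb
      _ = y := hx0
    filter_upwards [hIoo, (tendsto_id (x := nhds y)).eventually_const_lt hby] with z hz hz2
    by_contra hcon
    push_neg at hcon
    have : deriv φ (ψ z) ≤ deriv φ b := by
      rcases lt_or_eq_of_le hcon with h | h
      · exact (hanti (mem_Ici.mpr ((hpos y hy).le.trans hb.le))
          (mem_Ici.mpr (hψ z hz.1 hz.2.le).1) h).le
      · rw [← h]
    rw [(hψ z hz.1 hz.2.le).2] at this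
    exact absurd hz2 (not_lt.mpr this)

private lemma aux_psi_deriv (hφC : ContDiff ℝ 2 φ)
    (hφ'' : ∀ x : ℝ, x ≠ 0 → x * deriv (deriv φ) x < 0)
    (hψ : ∀ y : ℝ, 0 < y → y ≤ deriv φ 0 → 0 ≤ ψ y ∧ deriv φ (ψ y) = y)
    (hanti : StrictAntiOn (deriv φ) (Ici 0))
    {y : ℝ} (hy : y ∈ Ioo 0 (deriv φ 0)) :
    HasDerivAt ψ ((deriv (deriv φ) (ψ y))⁻¹) y := by
  have hcont : ContinuousAt ψ y := aux_psi_cont hψ hanti hy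
  have hpos : 0 < ψ y := aux_psi_pos hψ hy
  have hdphi : HasDerivAt (deriv φ) (deriv (deriv φ) (ψ y)) (ψ y) :=
    ((aux_phi1_diff hφC) (ψ y)).hasDerivAt
  have hne : deriv (deriv φ) (ψ y) ≠ 0 := (aux_phi2_neg hφ'' hpos).ne
  exact HasDerivAt.of_local_left_inverse hcont hdphi hne
    (eventually_of_mem (Ioo_mem_nhds hy.1 hy.2) (fun z hz => (hψ z hz.1 hz.2.le).2))

private lemma aux_dpsi_form (hφC : ContDiff ℝ 2 φ)
    (hφ'' : ∀ x : ℝ, x ≠ 0 → x * deriv (deriv φ) x < 0)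
    (hψ : ∀ y : ℝ, 0 < y → y ≤ deriv φ 0 → 0 ≤ ψ y ∧ deriv φ (ψ y) = y)
    (hanti : StrictAntiOn (deriv φ) (Ici 0)) :
    ∀ y ∈ Ioo 0 (deriv φ 0), deriv ψ y = (deriv (deriv φ) (ψ y))⁻¹ :=
  fun _ hy => (aux_psi_deriv hφC hφ'' hψ hanti hy).deriv

private lemma aux_dpsi_neg (hφC : ContDiff ℝ 2 φ)
    (hφ'' : ∀ x : ℝ, x ≠ 0 → x * deriv (deriv φ) x < 0)
    (hψ : ∀ y : ℝ, 0 < y → y ≤ deriv φ 0 → 0 ≤ ψ y ∧ deriv φ (ψ y) = y)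
    (hanti : StrictAntiOn (deriv φ) (Ici 0)) :
    ∀ y ∈ Ioo 0 (deriv φ 0), deriv ψ y < 0 := by
  intro y hy
  rw [aux_dpsi_form hφC hφ'' hψ hanti y hy]
  have h2 : deriv (deriv φ) (ψ y) < 0 := aux_phi2_neg hφ'' (aux_psi_pos hψ hy)
  exact inv_neg''.mpr h2

private lemma aux_dpsi_cont (hφC : ContDiff ℝ 2 φ)
    (hφ'' : ∀ x : ℝ, x ≠ 0 → x * deriv (deriv φ) x < 0)
    (hψ : ∀ y : ℝ, 0 < y → y ≤ deriv φ 0 → 0 ≤ ψ y ∧ deriv φ (ψ y) = y)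
    (hanti : StrictAntiOn (deriv φ) (Ici 0)) :
    ∀ y ∈ Ioo 0 (deriv φ 0), ContinuousAt (deriv ψ) y := by
  intro y hy
  have hcont2 : ContinuousAt (fun z => (deriv (deriv φ) (ψ z))⁻¹) y := by
    have hψc : ContinuousAt ψ y := aux_psi_cont hψ hanti hy
    have h2c : Continuous (deriv (deriv φ)) := aux_phi2_cont hφC
    apply ContinuousAt.inv₀ (h2c.continuousAt.comp hψc)
    have hneg : deriv (deriv φ) (ψ y) < 0 := aux_phi2_neg hφ'' (aux_psi_pos hψ hy)
    intro h
    simp only [Function.comp_apply] at h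
    rw [h] at hneg; exact lt_irrefl 0 hneg
  apply hcont2.congr
  filter_upwards [Ioo_mem_nhds hy.1 hy.2] with z hz
  exact (aux_dpsi_form hφC hφ'' hψ hanti z hz).symm

private lemma aux_anti_of_A2
    (hφ' : ∀ x : ℝ, 0 < deriv φ x)
    (hdpsi_neg : ∀ y ∈ Ioo 0 (deriv φ 0), deriv ψ y < 0)
    (hA2 : ∀ p q : ℝ, 0 < q → q < p →
      StrictMonoOn (fun β => deriv ψ (β * p) / deriv ψ (β * q))
        (Set.Ioo 0 (deriv φ 0 / p)))
    {a b : ℝ} (ha : 0 < a) (hab : a < b) :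
    StrictAntiOn (fun β => deriv ψ (β * a) / deriv ψ (β * b)) (Ioo 0 (deriv φ 0 / b)) := by
  have hb : 0 < b := ha.trans hab
  have hd0 : 0 < deriv φ 0 := hφ' 0
  have hmem : ∀ β ∈ Ioo 0 (deriv φ 0 / b), ∀ c : ℝ, 0 < c → c ≤ b →
      β * c ∈ Ioo 0 (deriv φ 0) := by
    intro β hβ c hc hcb
    constructor
    · exact mul_pos hβ.1 hc
    · have := hβ.2; rw [lt_div_iff₀ hb] at this
      nlinarith
  intro x hx y hy hxy
  have h := hA2 b a ha hab hx hy hxy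
  simp only [] at h ⊢
  have hax : deriv ψ (x * a) < 0 := hdpsi_neg _ (hmem x hx a ha hab.le)
  have hbx : deriv ψ (x * b) < 0 := hdpsi_neg _ (hmem x hx b hb le_rfl)
  have hay : deriv ψ (y * a) < 0 := hdpsi_neg _ (hmem y hy a ha hab.le)
  have hby : deriv ψ (y * b) < 0 := hdpsi_neg _ (hmem y hy b hb le_rfl)
  rw [show deriv ψ (x * b) / deriv ψ (x * a) = (-(deriv ψ (x * b))) / (-(deriv ψ (x * a))) by
        rw [neg_div_neg_eq],
      show deriv ψ (y * b) / deriv ψ (y * a) = (-(deriv ψ (y * b))) / (-(deriv ψ (y * a))) by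
        rw [neg_div_neg_eq],
      div_lt_div_iff₀ (by linarith) (by linarith)] at h
  rw [show deriv ψ (y * a) / deriv ψ (y * b) = (-(deriv ψ (y * a))) / (-(deriv ψ (y * b))) by
        rw [neg_div_neg_eq],
      show deriv ψ (x * a) / deriv ψ (x * b) = (-(deriv ψ (x * a))) / (-(deriv ψ (x * b))) by
        rw [neg_div_neg_eq],
      div_lt_div_iff₀ (by linarith) (by linarith)]
  nlinarith [h]

private lemma aux_f_cont
    (hdpsi_neg : ∀ y ∈ Ioo 0 (deriv φ 0), deriv ψ y < 0)
    (hdpsi_cont : ∀ y ∈ Ioo 0 (deriv φ 0), ContinuousAt (deriv ψ) y)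
    {a b β : ℝ} (h1 : β * a ∈ Ioo 0 (deriv φ 0)) (h2 : β * b ∈ Ioo 0 (deriv φ 0)) :
    ContinuousAt (fun t => deriv ψ (t * a) / deriv ψ (t * b)) β := by
  have hc1 : ContinuousAt (fun t : ℝ => deriv ψ (t * a)) β :=
    ContinuousAt.comp (g := deriv ψ) (f := fun t : ℝ => t * a) (x := β) (hdpsi_cont _ h1)
      (continuous_mul_right a).continuousAt
  have hc2 : ContinuousAt (fun t : ℝ => deriv ψ (t * b)) β :=
    ContinuousAt.comp (g := deriv ψ) (f := fun t : ℝ => t * b) (x := β) (hdpsi_cont _ h2)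
      (continuous_mul_right b).continuousAt
  exact hc1.div hc2 (hdpsi_neg _ h2).ne

private lemma aux_blowup
    (hφ' : ∀ x : ℝ, 0 < deriv φ x)
    (hφ'' : ∀ x : ℝ, x ≠ 0 → x * deriv (deriv φ) x < 0)
    (hψinv : ∀ x : ℝ, 0 ≤ x → ψ (deriv φ x) = x)
    (hc1 : Continuous (deriv φ))
    (hc2 : Continuous (deriv (deriv φ)))
    (hdpsi_form : ∀ y ∈ Ioo 0 (deriv φ 0), deriv ψ y = (deriv (deriv φ) (ψ y))⁻¹)
    (hdpsi_neg : ∀ y ∈ Ioo 0 (deriv φ 0), deriv ψ y < 0)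
    (hdpsi_cont : ∀ y ∈ Ioo 0 (deriv φ 0), ContinuousAt (deriv ψ) y)
    (hphi2_zero : deriv (deriv φ) 0 = 0)
    (hanti : StrictAntiOn (deriv φ) (Ici 0))
    {qa qb : ℝ} (hqb : 0 < qb) (hba : qb < qa) (C β₀ : ℝ)
    (hβ₀ : β₀ ∈ Ioo 0 (deriv φ 0 / qa)) :
    ∃ β ∈ Ioo 0 (deriv φ 0 / qa), β₀ < β ∧ C < deriv ψ (β * qa) / deriv ψ (β * qb) := by
  set d0 := deriv φ 0 with hd0def
  have hd0 : 0 < d0 := hφ' 0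
  have hqa : 0 < qa := hqb.trans hba
  have hβ₀qa : β₀ * qa < d0 := by
    have := hβ₀.2; rw [lt_div_iff₀ hqa] at this; exact this
  set K := Icc (β₀ * qb) (d0 * qb / qa) with hKdef
  have hKsub : K ⊆ Ioo 0 d0 := by
    intro y hy
    constructor
    · exact lt_of_lt_of_le (mul_pos hβ₀.1 hqb) hy.1
    · calc y ≤ d0 * qb / qa := hy.2
        _ < d0 := by rw [div_lt_iff₀ hqa]; nlinarith
  obtain ⟨Cd, hCd⟩ : ∃ Cd : ℝ, ∀ y ∈ K, |deriv ψ y| ≤ Cd := by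
    have hcont : ContinuousOn (deriv ψ) K := fun y hy =>
      (hdpsi_cont y (hKsub hy)).continuousWithinAt
    rcases (isCompact_Icc).exists_bound_of_continuousOn hcont with ⟨Cd, hCd⟩
    exact ⟨Cd, fun y hy => by simpa using hCd y hy⟩
  set Cd' := max Cd 1 with hCd'def
  have hCd'pos : 0 < Cd' := lt_of_lt_of_le one_pos (le_max_right _ _)
  set C' := max C 1 with hC'def
  have hC'pos : 0 < C' := lt_of_lt_of_le one_pos (le_max_right _ _)
  set δ := (C' * Cd')⁻¹ with hδdef
  have hδpos : 0 < δ := by positivity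
  have hE1 : ∀ᶠ x in nhdsWithin 0 (Ioi (0:ℝ)), β₀ * qa < deriv φ x := by
    have htd : Tendsto (deriv φ) (nhdsWithin 0 (Ioi (0:ℝ))) (nhds d0) :=
      (hc1.tendsto 0).mono_left nhdsWithin_le_nhds
    exact htd.eventually_const_lt hβ₀qa
  have hE2 : ∀ᶠ x in nhdsWithin 0 (Ioi (0:ℝ)), |deriv (deriv φ) x| < δ := by
    have htd : Tendsto (deriv (deriv φ)) (nhdsWithin 0 (Ioi (0:ℝ))) (nhds 0) := by
      have := hc2.tendsto 0
      rw [hphi2_zero] at this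
      exact this.mono_left nhdsWithin_le_nhds
    have h := htd.abs
    rw [abs_zero] at h
    exact h.eventually_lt_const hδpos
  obtain ⟨x, ⟨hx1, hx2⟩, hx3⟩ := ((hE1.and hE2).and self_mem_nhdsWithin).exists
  have hxpos : (0:ℝ) < x := hx3
  set β := deriv φ x / qa with hβdef
  have hphix_pos : 0 < deriv φ x := hφ' x
  have hphix_lt : deriv φ x < d0 := hanti (le_refl (0:ℝ)) hxpos.le hxpos
  have hβlt : β < d0 / qa := by
    rw [hβdef, div_lt_div_iff_of_pos_right hqa]
    exact hphix_lt
  have hβmem : β ∈ Ioo 0 (d0 / qa) := ⟨by positivity, hβlt⟩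
  have hβ₀β : β₀ < β := by
    rw [hβdef, lt_div_iff₀ hqa]
    exact hx1
  have hy1 : β * qa = deriv φ x := div_mul_cancel₀ _ hqa.ne'
  have hphi2x : deriv (deriv φ) x < 0 := by nlinarith [hφ'' x hxpos.ne']
  have hder1 : deriv ψ (β * qa) = (deriv (deriv φ) x)⁻¹ := by
    rw [hy1, hdpsi_form _ ⟨hphix_pos, hphix_lt⟩, hψinv x hxpos.le]
  have hy2K : β * qb ∈ K := by
    constructor
    · nlinarith
    · have h1 : β * qb ≤ (d0 / qa) * qb := by nlinarith
      calc β * qb ≤ (d0 / qa) * qb := h1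
        _ = d0 * qb / qa := by ring
  have hy2Ioo : β * qb ∈ Ioo 0 d0 := hKsub hy2K
  have hbneg : deriv ψ (β * qb) < 0 := hdpsi_neg _ hy2Ioo
  have hbabs : -(deriv ψ (β * qb)) ≤ Cd' := by
    have := hCd _ hy2K
    rw [abs_of_neg hbneg] at this
    exact this.trans (le_max_left _ _)
  have hbpos : 0 < -(deriv ψ (β * qb)) := by linarith
  set u := -(deriv (deriv φ) x) with hudef
  have hupos : 0 < u := by rw [hudef]; linarith
  have huδ : u < δ := by
    rw [hudef]
    calc -(deriv (deriv φ) x) ≤ |deriv (deriv φ) x| := neg_le_abs _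
      _ < δ := hx2
  have hna : C' * Cd' < -(deriv ψ (β * qa)) := by
    rw [hder1, ← inv_neg]
    have h1 : δ⁻¹ < u⁻¹ := by
      apply inv_strictAnti₀ hupos huδ
    rw [hδdef, inv_inv] at h1
    rw [← hudef]
    exact h1
  have hrat : deriv ψ (β * qa) / deriv ψ (β * qb)
      = (-(deriv ψ (β * qa))) / (-(deriv ψ (β * qb))) := by ring
  refine ⟨β, hβmem, hβ₀β, ?_⟩
  rw [hrat]
  calc C ≤ C' := le_max_left _ _
    _ = (C' * Cd') / Cd' := by field_simp
    _ < (-(deriv ψ (β * qa))) / Cd' := by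
        apply div_lt_div_of_pos_right hna hCd'pos
    _ ≤ (-(deriv ψ (β * qa))) / (-(deriv ψ (β * qb))) := by
        apply div_le_div_of_nonneg_left ?_ hbpos hbabs
        nlinarith [hna, hC'pos, hCd'pos]

private lemma aux_pair_mono
    (hφ' : ∀ x : ℝ, 0 < deriv φ x)
    (hφ'' : ∀ x : ℝ, x ≠ 0 → x * deriv (deriv φ) x < 0)
    (hψinv : ∀ x : ℝ, 0 ≤ x → ψ (deriv φ x) = x)
    (hc1 : Continuous (deriv φ))
    (hc2 : Continuous (deriv (deriv φ)))
    (hdpsi_form : ∀ y ∈ Ioo 0 (deriv φ 0), deriv ψ y = (deriv (deriv φ) (ψ y))⁻¹)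
    (hdpsi_neg : ∀ y ∈ Ioo 0 (deriv φ 0), deriv ψ y < 0)
    (hdpsi_cont : ∀ y ∈ Ioo 0 (deriv φ 0), ContinuousAt (deriv ψ) y)
    (hphi2_zero : deriv (deriv φ) 0 = 0)
    (hanti : StrictAntiOn (deriv φ) (Ici 0))
    (hA2 : ∀ p q : ℝ, 0 < q → q < p →
      StrictMonoOn (fun β => deriv ψ (β * p) / deriv ψ (β * q))
        (Set.Ioo 0 (deriv φ 0 / p)))
    (hA3 : ∀ qj qn ql : ℝ, 0 < qj → qj < qn → qn < ql →
      StrictMonoOn (fun β => deriv (fun t => deriv ψ (t * qj) / deriv ψ (t * qn)) β /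
          deriv (fun t => deriv ψ (t * ql) / deriv ψ (t * qn)) β)
        (Set.Ioo 0 (deriv φ 0 / ql)) ∨
      StrictAntiOn (fun β => deriv (fun t => deriv ψ (t * qj) / deriv ψ (t * qn)) β /
          deriv (fun t => deriv ψ (t * ql) / deriv ψ (t * qn)) β)
        (Set.Ioo 0 (deriv φ 0 / ql)))
    {qj qn ql : ℝ} (hqj : 0 < qj) (hjn : qj < qn) (hnl : qn < ql) :
    StrictMonoOn (fun β => deriv (fun t => deriv ψ (t * qj) / deriv ψ (t * qn)) β /
        deriv (fun t => deriv ψ (t * ql) / deriv ψ (t * qn)) β)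
      (Set.Ioo 0 (deriv φ 0 / ql)) := by
  set d0 := deriv φ 0 with hd0def
  have hd0 : 0 < d0 := hφ' 0
  have hqn : 0 < qn := hqj.trans hjn
  have hql : 0 < ql := hqn.trans hnl
  set fj := fun t => deriv ψ (t * qj) / deriv ψ (t * qn) with hfjdef
  set fl := fun t => deriv ψ (t * ql) / deriv ψ (t * qn) with hfldef
  set num := fun β => deriv fj β with hnumdef
  set den := fun β => deriv fl β with hdendef
  set J := Ioo (0:ℝ) (d0 / ql) with hJdef
  rcases hA3 qj qn ql hqj hjn hnl with hmono | hanti3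
  · exact hmono
  exfalso
  have hJn : J ⊆ Ioo 0 (d0 / qn) := by
    apply Ioo_subset_Ioo le_rfl
    apply div_le_div_of_nonneg_left hd0.le hqn hnl.le
  have hargs : ∀ β ∈ J, ∀ c : ℝ, 0 < c → c ≤ ql → β * c ∈ Ioo 0 d0 := by
    intro β hβ c hc hcl
    constructor
    · exact mul_pos hβ.1 hc
    · have := hβ.2; rw [lt_div_iff₀ hql] at this; nlinarith
  have hfj_anti : StrictAntiOn fj (Ioo 0 (d0 / qn)) := aux_anti_of_A2 hφ' hdpsi_neg hA2 hqj hjn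
  have hfl_mono : StrictMonoOn fl J := hA2 ql qn hqn hnl
  set Z := ({β ∈ J | num β = 0} ∪ {β ∈ J | den β = 0}) with hZdef
  have hZsub : Z.Subsingleton := aux_subsingleton_zero (Or.inr hanti3)
  have hZfin : Z.Finite := hZsub.finite
  have hJinf : J.Infinite := Set.Ioo_infinite (by positivity)
  obtain ⟨β₀, hβ₀⟩ := (hJinf.diff hZfin).nonempty
  have hβ₀J : β₀ ∈ J := hβ₀.1
  have hnum0 : num β₀ ≠ 0 := fun h => hβ₀.2 (Or.inl ⟨hβ₀J, h⟩)
  have hden0 : den β₀ ≠ 0 := fun h => hβ₀.2 (Or.inr ⟨hβ₀J, h⟩)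
  have hdiffj : DifferentiableAt ℝ fj β₀ := differentiableAt_of_deriv_ne_zero hnum0
  have hdiffl : DifferentiableAt ℝ fl β₀ := differentiableAt_of_deriv_ne_zero hden0
  have hnumneg : num β₀ < 0 := by
    rcases lt_or_eq_of_le (aux_deriv_nonpos_of_antitoneOn
      ((isOpen_Ioo).mem_nhds (hJn hβ₀J)) hfj_anti.antitoneOn hdiffj) with h | h
    · exact h
    · exact absurd h hnum0
  have hdenpos : 0 < den β₀ := by
    rcases lt_or_eq_of_le (aux_deriv_nonneg_of_monotoneOn
      ((isOpen_Ioo).mem_nhds hβ₀J) hfl_mono.monotoneOn hdiffl) with h | h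
    · exact h
    · exact absurd h.symm hden0
  set ε := -(num β₀ / den β₀) with hεdef
  have hε : 0 < ε := by
    rw [hεdef]
    have : num β₀ / den β₀ < 0 := div_neg_of_neg_of_pos hnumneg hdenpos
    linarith
  have hkey : ∀ b ∈ J, β₀ < b → ε * fl b < fj β₀ + ε * fl β₀ := by
    intro b hbJ hβ₀b
    have hIccsub : Icc β₀ b ⊆ J := by
      intro x hx
      exact ⟨lt_of_lt_of_le hβ₀J.1 hx.1, lt_of_le_of_lt hx.2 hbJ.2⟩
    have hIoosub : Ioo β₀ b ⊆ J := fun x hx => hIccsub (Ioo_subset_Icc_self hx)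
    set g := fun t => fj t + ε * fl t with hgdef
    have hganti : AntitoneOn g (Icc β₀ b) := by
      apply aux_antitoneOn_off_finite hZfin
      · intro x hx
        have hxJ : x ∈ J := hIccsub hx
        have hcj : ContinuousAt fj x :=
          aux_f_cont hdpsi_neg hdpsi_cont (hargs x hxJ qj hqj (hjn.trans hnl).le)
            (hargs x hxJ qn hqn hnl.le)
        have hcl : ContinuousAt fl x :=
          aux_f_cont hdpsi_neg hdpsi_cont (hargs x hxJ ql hql le_rfl)
            (hargs x hxJ qn hqn hnl.le)
        exact (hcj.add (continuousAt_const.mul hcl)).continuousWithinAt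
      · intro x hx
        have hxJ : x ∈ J := hIoosub hx.1
        have hnumx : num x ≠ 0 := fun h => hx.2 (Or.inl ⟨hxJ, h⟩)
        have hdenx : den x ≠ 0 := fun h => hx.2 (Or.inr ⟨hxJ, h⟩)
        have hdjx : DifferentiableAt ℝ fj x := differentiableAt_of_deriv_ne_zero hnumx
        have hdlx : DifferentiableAt ℝ fl x := differentiableAt_of_deriv_ne_zero hdenx
        have hdg : HasDerivAt g (num x + ε * den x) x :=
          (hdjx.hasDerivAt).add ((hdlx.hasDerivAt).const_mul ε)
        refine ⟨hdg.differentiableAt, ?_⟩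
        rw [hdg.deriv]
        have hRx : num x / den x < -ε := by
          have := hanti3 hβ₀J hxJ hx.1.1
          simp only [] at this
          rw [hεdef]; rw [neg_neg]
          exact this
        have hdenxpos : 0 < den x := by
          rcases lt_or_eq_of_le (aux_deriv_nonneg_of_monotoneOn
            ((isOpen_Ioo).mem_nhds hxJ) hfl_mono.monotoneOn hdlx) with h | h
          · exact h
          · exact absurd h.symm hdenx
        rw [div_lt_iff₀ hdenxpos] at hRx
        nlinarith
    have h1 : g b ≤ g β₀ := hganti (left_mem_Icc.mpr hβ₀b.le) (right_mem_Icc.mpr hβ₀b.le) hβ₀b.le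
    have h2 : 0 < fj b :=
      div_pos_of_neg_of_neg (hdpsi_neg _ (hargs b hbJ qj hqj (hjn.trans hnl).le))
        (hdpsi_neg _ (hargs b hbJ qn hqn hnl.le))
    have h3 : g b = fj b + ε * fl b := rfl
    have h4 : g β₀ = fj β₀ + ε * fl β₀ := rfl
    linarith
  obtain ⟨b, hbJ, hβ₀b, hC⟩ := aux_blowup hφ' hφ'' hψinv hc1 hc2 hdpsi_form hdpsi_neg hdpsi_cont
    hphi2_zero hanti hqn hnl ((fj β₀ + ε * fl β₀) / ε) β₀ hβ₀J
  have h1 := hkey b hbJ hβ₀b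
  have h2 : (fj β₀ + ε * fl β₀) / ε < fl b := hC
  rw [div_lt_iff₀ hε, mul_comm] at h2
  linarith

end PhiPsi

set_option maxHeartbeats 2000000 in
/-- Under (A1)–(A3), with `lⱼ > 0`, `qⱼ > 0` pairwise distinct and the
last `q` not the maximal one, the function
`g₁'(β) = ∑_{j≠n} lⱼ qⱼ ψ'(β qⱼ) − lₙ qₙ ψ'(β qₙ)` has at most two zeros on
`(0, β_max)`, where `β_max = φ'(0)/max_j qⱼ`. -/
theorem stmt_6 (n : ℕ) (hn : 1 ≤ n) (φ ψ : ℝ → ℝ)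
    (hφC : ContDiff ℝ 2 φ)
    (hodd : ∀ x : ℝ, φ (-x) = -φ x)
    (hφ' : ∀ x : ℝ, 0 < deriv φ x)
    (hφ'' : ∀ x : ℝ, x ≠ 0 → x * deriv (deriv φ) x < 0)
    (hlim : ∃ L : ℝ, Filter.Tendsto φ Filter.atTop (nhds L))
    (hψ : ∀ y : ℝ, 0 < y → y ≤ deriv φ 0 → 0 ≤ ψ y ∧ deriv φ (ψ y) = y)
    (hψinv : ∀ x : ℝ, 0 ≤ x → ψ (deriv φ x) = x)
    (hA2 : ∀ p q : ℝ, 0 < q → q < p →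
      StrictMonoOn (fun β => deriv ψ (β * p) / deriv ψ (β * q))
        (Set.Ioo 0 (deriv φ 0 / p)))
    (hA3 : ∀ qj qn ql : ℝ, 0 < qj → qj < qn → qn < ql →
      StrictMonoOn (fun β => deriv (fun t => deriv ψ (t * qj) / deriv ψ (t * qn)) β /
          deriv (fun t => deriv ψ (t * ql) / deriv ψ (t * qn)) β)
        (Set.Ioo 0 (deriv φ 0 / ql)) ∨
      StrictAntiOn (fun β => deriv (fun t => deriv ψ (t * qj) / deriv ψ (t * qn)) β /
          deriv (fun t => deriv ψ (t * ql) / deriv ψ (t * qn)) β)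
        (Set.Ioo 0 (deriv φ 0 / ql)))
    (l q : Fin (n + 1) → ℝ) (hl : ∀ j, 0 < l j) (hqpos : ∀ j, 0 < q j)
    (hqinj : Function.Injective q)
    (hqn : ∃ j, j ≠ Fin.last n ∧ q (Fin.last n) < q j)
    (βmax : ℝ) (hβmax : βmax = deriv φ 0 / Finset.univ.sup' Finset.univ_nonempty q)
    (G : ℝ → ℝ)
    (hG : ∀ β : ℝ, G β =
      (∑ j ∈ Finset.univ.erase (Fin.last n), l j * q j * deriv ψ (β * q j)) -
        l (Fin.last n) * q (Fin.last n) * deriv ψ (β * q (Fin.last n))) :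
    ∀ β₁ ∈ Set.Ioo (0 : ℝ) βmax, ∀ β₂ ∈ Set.Ioo (0 : ℝ) βmax,
      ∀ β₃ ∈ Set.Ioo (0 : ℝ) βmax,
      G β₁ = 0 → G β₂ = 0 → G β₃ = 0 → β₁ = β₂ ∨ β₁ = β₃ ∨ β₂ = β₃ := by
  intro β₁ hβ₁ β₂ hβ₂ β₃ hβ₃ hG1 hG2 hG3
  classical
  -- basic facts
  have hd0 : 0 < deriv φ 0 := hφ' 0
  have hc1 : Continuous (deriv φ) := aux_phi1_cont hφC
  have hc2 : Continuous (deriv (deriv φ)) := aux_phi2_cont hφC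
  have hantiφ : StrictAntiOn (deriv φ) (Ici 0) := aux_phi1_anti hφC hφ''
  have hphi2_zero : deriv (deriv φ) 0 = 0 := aux_phi2_zero hφC hodd
  have hform := aux_dpsi_form hφC hφ'' hψ hantiφ
  have hneg := aux_dpsi_neg hφC hφ'' hψ hantiφ
  have hdcont := aux_dpsi_cont hφC hφ'' hψ hantiφ
  set d0 := deriv φ 0 with hd0def
  set M := Finset.univ.sup' Finset.univ_nonempty q with hMdef
  have hM : ∀ j, q j ≤ M := fun j => Finset.le_sup' q (Finset.mem_univ j)
  have hMpos : 0 < M := lt_of_lt_of_le (hqpos (Fin.last n)) (hM _)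
  have hβmaxval : βmax = d0 / M := hβmax
  have hβmaxpos : 0 < βmax := by rw [hβmaxval]; positivity
  set I := Ioo (0:ℝ) βmax with hIdef
  have hsubJ : ∀ j : Fin (n+1), I ⊆ Ioo 0 (d0 / q j) := by
    intro j
    rw [hIdef, hβmaxval]
    apply Ioo_subset_Ioo le_rfl
    exact div_le_div_of_nonneg_left hd0.le (hqpos j) (hM j)
  have hIargs : ∀ β ∈ I, ∀ j : Fin (n+1), β * q j ∈ Ioo 0 d0 := by
    intro β hβ j
    constructor
    · exact mul_pos hβ.1 (hqpos j)
    · have h1 : β < d0 / M := by rw [← hβmaxval]; exact hβ.2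
      rw [lt_div_iff₀ hMpos] at h1
      calc β * q j ≤ β * M := by nlinarith [hM j, hβ.1]
        _ < d0 := h1
  set E := Finset.univ.erase (Fin.last n) with hEdef
  set qn := q (Fin.last n) with hqndef
  have hqnpos : 0 < qn := hqpos _
  have hqnE : ∀ j ∈ E, q j ≠ qn := by
    intro j hj h
    exact (Finset.mem_erase.mp hj).1 (hqinj h)
  obtain ⟨j₀, hj₀ne, hj₀gt⟩ := hqn
  have hj₀E : j₀ ∈ E := Finset.mem_erase.mpr ⟨hj₀ne, Finset.mem_univ _⟩
  set f : Fin (n+1) → ℝ → ℝ := fun j t => deriv ψ (t * q j) / deriv ψ (t * qn) with hfdef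
  set H : ℝ → ℝ := fun t => ∑ j ∈ E, (l j * q j) * f j t with hHdef
  -- zeros of G are level points of H
  have hHzero : ∀ β ∈ I, G β = 0 → H β = l (Fin.last n) * qn := by
    intro β hβ hGβ
    have hne : deriv ψ (β * qn) ≠ 0 := (hneg _ (hIargs β hβ (Fin.last n))).ne
    have hmul : H β * deriv ψ (β * qn) = ∑ j ∈ E, l j * q j * deriv ψ (β * q j) := by
      rw [hHdef]
      simp only []
      rw [Finset.sum_mul]
      refine Finset.sum_congr rfl (fun j hj => ?_)
      rw [hfdef]
      field_simp
    have hsum : ∑ j ∈ E, l j * q j * deriv ψ (β * q j)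
        = l (Fin.last n) * qn * deriv ψ (β * qn) := by
      have h := hG β
      rw [hGβ] at h
      linarith
    have : H β * deriv ψ (β * qn) = (l (Fin.last n) * qn) * deriv ψ (β * qn) := by
      rw [hmul, hsum]
    exact mul_right_cancel₀ hne this
  -- continuity of H on I
  have hHcont : ∀ γ ∈ I, ContinuousAt H γ := by
    intro γ hγ
    have hterm : ∀ j ∈ E, ContinuousAt (fun t => (l j * q j) * f j t) γ := by
      intro j hj
      exact continuousAt_const.mul
        (aux_f_cont hneg hdcont (hIargs γ hγ j) (hIargs γ hγ (Fin.last n)))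
    exact tendsto_finset_sum E (fun j hj => hterm j hj)
  -- main reduction to ordered triples
  suffices hkey : ∀ x ∈ I, ∀ y ∈ I, ∀ z ∈ I, G x = 0 → G y = 0 → G z = 0 →
      x < y → y < z → False by
    by_contra hcon
    push_neg at hcon
    obtain ⟨h12, h13, h23⟩ := hcon
    rcases lt_trichotomy β₁ β₂ with hab | hab | hab
    · rcases lt_trichotomy β₂ β₃ with hbc | hbc | hbc
      · exact hkey β₁ hβ₁ β₂ hβ₂ β₃ hβ₃ hG1 hG2 hG3 hab hbc
      · exact h23 hbc
      · rcases lt_trichotomy β₁ β₃ with hac | hac | hac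
        · exact hkey β₁ hβ₁ β₃ hβ₃ β₂ hβ₂ hG1 hG3 hG2 hac hbc
        · exact h13 hac
        · exact hkey β₃ hβ₃ β₁ hβ₁ β₂ hβ₂ hG3 hG1 hG2 hac hab
    · exact h12 hab
    · rcases lt_trichotomy β₁ β₃ with hac | hac | hac
      · exact hkey β₂ hβ₂ β₁ hβ₁ β₃ hβ₃ hG2 hG1 hG3 hab hac
      · exact h13 hac
      · rcases lt_trichotomy β₂ β₃ with hbc | hbc | hbc
        · exact hkey β₂ hβ₂ β₃ hβ₃ β₁ hβ₁ hG2 hG3 hG1 hbc hac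
        · exact h23 hbc
        · exact hkey β₃ hβ₃ β₂ hβ₂ β₁ hβ₁ hG3 hG2 hG1 hbc hab
  intro x hx y hy z hz hGx hGy hGz hxy hyz
  have hHx := hHzero x hx hGx
  have hHy := hHzero y hy hGy
  have hHz := hHzero z hz hGz
  set N := E.filter (fun j => q j < qn) with hNdef
  set P := E.filter (fun j => qn < q j) with hPdef
  have hj₀P : j₀ ∈ P := Finset.mem_filter.mpr ⟨hj₀E, hj₀gt⟩
  have hNPsplit : ∀ (g : Fin (n+1) → ℝ),
      ∑ j ∈ E, g j = (∑ j ∈ P, g j) + (∑ j ∈ N, g j) := by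
    intro g
    rw [hPdef, hNdef]
    rw [← Finset.sum_filter_add_sum_filter_not E (fun j => qn < q j) g]
    congr 1
    apply Finset.sum_congr ?_ (fun _ _ => rfl)
    apply Finset.filter_congr
    intro j hj
    simp only [not_lt]
    constructor
    · intro h
      exact lt_of_le_of_ne h (hqnE j hj)
    · intro h
      exact h.le
  by_cases hN : N.Nonempty
  case neg =>
    -- all q j > qn on E : H strictly monotone
    have hallgt : ∀ j ∈ E, qn < q j := by
      intro j hj
      rcases lt_trichotomy (q j) qn with h | h | h
      · exact absurd ⟨j, Finset.mem_filter.mpr ⟨hj, h⟩⟩ hN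
      · exact absurd h (hqnE j hj)
      · exact h
    have hmono : StrictMonoOn H I := by
      intro a ha b hb hab
      rw [hHdef]
      simp only []
      apply Finset.sum_lt_sum_of_nonempty ⟨j₀, hj₀E⟩
      intro j hj
      have hlt := hA2 (q j) qn hqnpos (hallgt j hj) (hsubJ j ha) (hsubJ j hb) hab
      simp only [] at hlt
      have hpos : 0 < l j * q j := mul_pos (hl j) (hqpos j)
      exact mul_lt_mul_of_pos_left hlt hpos
    have h := hmono hx hy hxy
    rw [hHx, hHy] at h
    exact lt_irrefl _ h
  case pos =>
    obtain ⟨j₁, hj₁N⟩ := hN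
    have hj₁E : j₁ ∈ E := (Finset.mem_filter.mp hj₁N).1
    have hj₁lt : q j₁ < qn := (Finset.mem_filter.mp hj₁N).2
    -- pairwise monotone ratios
    have hpair : ∀ ja ∈ N, ∀ jb ∈ P, StrictMonoOn
        (fun β => deriv (f ja) β / deriv (f jb) β) (Ioo 0 (d0 / q jb)) := by
      intro ja hja jb hjb
      have h1 : q ja < qn := (Finset.mem_filter.mp hja).2
      have h2 : qn < q jb := (Finset.mem_filter.mp hjb).2
      exact aux_pair_mono hφ' hφ'' hψinv hc1 hc2 hform hneg hdcont hphi2_zero hantiφ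
        hA2 hA3 (hqpos ja) h1 h2
    -- the exceptional set B
    have hZsub : ∀ j ∈ E, ({β ∈ I | deriv (f j) β = 0}).Subsingleton := by
      intro j hj
      rcases lt_trichotomy (q j) qn with h | h | h
      · have hmem : j ∈ N := Finset.mem_filter.mpr ⟨hj, h⟩
        refine Set.Subsingleton.anti (aux_subsingleton_zero
          (Or.inl (hpair j hmem j₀ hj₀P))) ?_
        intro β hβ
        exact Or.inl ⟨hsubJ j₀ hβ.1, hβ.2⟩
      · exact absurd h (hqnE j hj)
      · have hmem : j ∈ P := Finset.mem_filter.mpr ⟨hj, h⟩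
        refine Set.Subsingleton.anti (aux_subsingleton_zero
          (Or.inl (hpair j₁ hj₁N j hmem))) ?_
        intro β hβ
        exact Or.inr ⟨hsubJ j hβ.1, hβ.2⟩
    set B := ⋃ j ∈ (↑E : Set (Fin (n+1))), {β ∈ I | deriv (f j) β = 0} with hBdef
    have hBfin : B.Finite :=
      Set.Finite.biUnion E.finite_toSet (fun j hj => (hZsub j (Finset.mem_coe.mp hj)).finite)
    have hgood : ∀ γ ∈ I \ B, ∀ j ∈ E, deriv (f j) γ ≠ 0 := by
      intro γ hγ j hj h
      exact hγ.2 (Set.mem_biUnion (Finset.mem_coe.mpr hj) ⟨hγ.1, h⟩)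
    have hsignN : ∀ γ ∈ I \ B, ∀ j ∈ N, deriv (f j) γ < 0 := by
      intro γ hγ j hj
      have hjE : j ∈ E := (Finset.mem_filter.mp hj).1
      have hjlt : q j < qn := (Finset.mem_filter.mp hj).2
      have hne := hgood γ hγ j hjE
      have hanti : StrictAntiOn (f j) (Ioo 0 (d0 / qn)) :=
        aux_anti_of_A2 hφ' hneg hA2 (hqpos j) hjlt
      have hsub : I ⊆ Ioo 0 (d0 / qn) := hsubJ (Fin.last n)
      have hle := aux_deriv_nonpos_of_antitoneOn ((isOpen_Ioo).mem_nhds (hsub hγ.1))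
        hanti.antitoneOn (differentiableAt_of_deriv_ne_zero hne)
      exact lt_of_le_of_ne hle hne
    have hsignP : ∀ γ ∈ I \ B, ∀ j ∈ P, 0 < deriv (f j) γ := by
      intro γ hγ j hj
      have hjE : j ∈ E := (Finset.mem_filter.mp hj).1
      have hjgt : qn < q j := (Finset.mem_filter.mp hj).2
      have hne := hgood γ hγ j hjE
      have hmono : StrictMonoOn (f j) (Ioo 0 (d0 / q j)) := hA2 (q j) qn hqnpos hjgt
      have hge := aux_deriv_nonneg_of_monotoneOn ((isOpen_Ioo).mem_nhds ((hsubJ j) hγ.1))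
        hmono.monotoneOn (differentiableAt_of_deriv_ne_zero hne)
      exact lt_of_le_of_ne hge (Ne.symm hne)
    set S : ℝ → ℝ := fun γ => ∑ j ∈ E, (l j * q j) * deriv (f j) γ with hSdef
    have hHder : ∀ γ ∈ I \ B, HasDerivAt H (S γ) γ := by
      intro γ hγ
      apply HasDerivAt.fun_sum
      intro j hj
      exact ((differentiableAt_of_deriv_ne_zero (hgood γ hγ j hj)).hasDerivAt).const_mul _
    -- final contradiction from two suitable points
    have hfinal : ∀ σ ∈ I \ B, ∀ τ ∈ I \ B, σ < τ → 0 ≤ S σ → S τ ≤ 0 → False := by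
      intro σ hσ τ hτ hστ hSσ hSτ
      set A1 := ∑ j ∈ P, (l j * q j) * deriv (f j) σ with hA1def
      set A2 := ∑ j ∈ P, (l j * q j) * deriv (f j) τ with hA2def
      set B1 := ∑ j ∈ N, (l j * q j) * (-(deriv (f j) σ)) with hB1def
      set B2 := ∑ j ∈ N, (l j * q j) * (-(deriv (f j) τ)) with hB2def
      have hnegsum1 : B1 = -∑ j ∈ N, (l j * q j) * deriv (f j) σ := by
        rw [hB1def, ← Finset.sum_neg_distrib]
        exact Finset.sum_congr rfl (fun _ _ => by ring)
      have hnegsum2 : B2 = -∑ j ∈ N, (l j * q j) * deriv (f j) τ := by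
        rw [hB2def, ← Finset.sum_neg_distrib]
        exact Finset.sum_congr rfl (fun _ _ => by ring)
      have hS1 : S σ = A1 - B1 := by
        rw [hSdef]
        simp only []
        rw [hNPsplit (fun j => (l j * q j) * deriv (f j) σ), hnegsum1]
        ring
      have hS2 : S τ = A2 - B2 := by
        rw [hSdef]
        simp only []
        rw [hNPsplit (fun j => (l j * q j) * deriv (f j) τ), hnegsum2]
        ring
      have hA1pos : 0 < A1 :=
        Finset.sum_pos (fun j hj => mul_pos (mul_pos (hl j) (hqpos j)) (hsignP σ hσ j hj))
          ⟨j₀, hj₀P⟩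
      have hA2pos : 0 < A2 :=
        Finset.sum_pos (fun j hj => mul_pos (mul_pos (hl j) (hqpos j)) (hsignP τ hτ j hj))
          ⟨j₀, hj₀P⟩
      have hB1pos : 0 < B1 :=
        Finset.sum_pos (fun j hj => mul_pos (mul_pos (hl j) (hqpos j))
          (by linarith [hsignN σ hσ j hj])) ⟨j₁, hj₁N⟩
      have hB2pos : 0 < B2 :=
        Finset.sum_pos (fun j hj => mul_pos (mul_pos (hl j) (hqpos j))
          (by linarith [hsignN τ hτ j hj])) ⟨j₁, hj₁N⟩
      have hpq : ∀ j ∈ N, ∀ k ∈ P,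
          deriv (f j) σ * deriv (f k) τ < deriv (f j) τ * deriv (f k) σ := by
        intro j hj k hk
        have h := hpair j hj k hk (hsubJ k hσ.1) (hsubJ k hτ.1) hστ
        simp only [] at h
        rw [div_lt_div_iff₀ (hsignP σ hσ k hk) (hsignP τ hτ k hk)] at h
        exact h
      have hcross : B2 * A1 < B1 * A2 := by
        rw [hB2def, hA1def, hB1def, hA2def, Finset.sum_mul_sum, Finset.sum_mul_sum]
        apply Finset.sum_lt_sum_of_nonempty ⟨j₁, hj₁N⟩
        intro j hj
        apply Finset.sum_lt_sum_of_nonempty ⟨j₀, hj₀P⟩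
        intro k hk
        have h := hpq j hj k hk
        have hcj : 0 < l j * q j := mul_pos (hl j) (hqpos j)
        have hck : 0 < l k * q k := mul_pos (hl k) (hqpos k)
        nlinarith [mul_pos hcj hck, h]
      have hba1 : B1 ≤ A1 := by linarith
      have hba2 : A2 ≤ B2 := by linarith
      nlinarith [hcross, mul_le_mul_of_nonneg_right hba1 hA2pos.le,
        mul_le_mul_of_nonneg_left hba2 hA1pos.le]
    -- shape argument
    by_cases hW : ∃ σ, σ ∈ Ioo x y ∧ σ ∉ B ∧ 0 ≤ S σ
    · obtain ⟨σ, hσxy, hσB, hSσ⟩ := hW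
      have hσI : σ ∈ I := ⟨lt_trans hx.1 hσxy.1, lt_trans hσxy.2 hy.2⟩
      by_cases hW2 : ∃ τ, τ ∈ Ioo y z ∧ τ ∉ B ∧ S τ ≤ 0
      · obtain ⟨τ, hτyz, hτB, hSτ⟩ := hW2
        have hτI : τ ∈ I := ⟨lt_trans hy.1 hτyz.1, lt_trans hτyz.2 hz.2⟩
        exact hfinal σ ⟨hσI, hσB⟩ τ ⟨hτI, hτB⟩ (lt_trans hσxy.2 hτyz.1) hSσ hSτ
      · push_neg at hW2
        have hsub1 : Ioo y z ⊆ I := fun w hw => ⟨lt_trans hy.1 hw.1, lt_trans hw.2 hz.2⟩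
        have hsub2 : Icc y z ⊆ I := fun w hw =>
          ⟨lt_of_lt_of_le hy.1 hw.1, lt_of_le_of_lt hw.2 hz.2⟩
        have hmono : MonotoneOn H (Icc y z) := by
          apply aux_monotoneOn_off_finite hBfin H y z
          · exact fun w hw => (hHcont w (hsub2 hw)).continuousWithinAt
          · intro w hw
            have hwI : w ∈ I \ B := ⟨hsub1 hw.1, hw.2⟩
            have hder := hHder w hwI
            refine ⟨hder.differentiableAt, ?_⟩
            rw [hder.deriv]
            exact (hW2 w hw.1 hw.2).le
        have hconst : ∀ w ∈ Icc y z, H w = l (Fin.last n) * qn := by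
          intro w hw
          have h1 : H y ≤ H w := hmono (left_mem_Icc.mpr (le_of_lt hyz)) hw hw.1
          have h2 : H w ≤ H z := hmono hw (right_mem_Icc.mpr (le_of_lt hyz)) hw.2
          rw [hHy] at h1
          rw [hHz] at h2
          linarith
        obtain ⟨τ, hτ⟩ := ((Set.Ioo_infinite hyz).diff hBfin).nonempty
        have hτyz : τ ∈ Ioo y z := hτ.1
        have hτI : τ ∈ I \ B := ⟨hsub1 hτyz, hτ.2⟩
        have hder := hHder τ hτI
        have hd0' : deriv H τ = 0 := by
          have hEq : H =ᶠ[nhds τ] (fun _ => l (Fin.last n) * qn) := by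
            filter_upwards [Ioo_mem_nhds hτyz.1 hτyz.2] with w hw
            exact hconst w (Ioo_subset_Icc_self hw)
          rw [hEq.deriv_eq]
          exact deriv_const τ _
        rw [hder.deriv] at hd0'
        have := hW2 τ hτyz hτ.2
        linarith
    · push_neg at hW
      have hsub1 : Ioo x y ⊆ I := fun w hw => ⟨lt_trans hx.1 hw.1, lt_trans hw.2 hy.2⟩
      have hsub2 : Icc x y ⊆ I := fun w hw =>
        ⟨lt_of_lt_of_le hx.1 hw.1, lt_of_le_of_lt hw.2 hy.2⟩
      have hanti : AntitoneOn H (Icc x y) := by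
        apply aux_antitoneOn_off_finite hBfin H x y
        · exact fun w hw => (hHcont w (hsub2 hw)).continuousWithinAt
        · intro w hw
          have hwI : w ∈ I \ B := ⟨hsub1 hw.1, hw.2⟩
          have hder := hHder w hwI
          refine ⟨hder.differentiableAt, ?_⟩
          rw [hder.deriv]
          exact (hW w hw.1 hw.2).le
      have hconst : ∀ w ∈ Icc x y, H w = l (Fin.last n) * qn := by
        intro w hw
        have h1 : H w ≤ H x := hanti (left_mem_Icc.mpr (le_of_lt hxy)) hw hw.1
        have h2 : H y ≤ H w := hanti hw (right_mem_Icc.mpr (le_of_lt hxy)) hw.2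
        rw [hHx] at h1
        rw [hHy] at h2
        linarith
      obtain ⟨σ, hσ⟩ := ((Set.Ioo_infinite hxy).diff hBfin).nonempty
      have hσxy : σ ∈ Ioo x y := hσ.1
      have hσI : σ ∈ I \ B := ⟨hsub1 hσxy, hσ.2⟩
      have hder := hHder σ hσI
      have hd0' : deriv H σ = 0 := by
        have hEq : H =ᶠ[nhds σ] (fun _ => l (Fin.last n) * qn) := by
          filter_upwards [Ioo_mem_nhds hσxy.1 hσxy.2] with w hw
          exact hconst w (Ioo_subset_Icc_self hw)
        rw [hEq.deriv_eq]
        exact deriv_const σ _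
      rw [hder.deriv] at hd0'
      have := hW σ hσxy hσ.2
      linarith
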